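/- Let f : ℤ → ℝ/ℤ be a polynomial of degree d written as f(n) = ∑_{i=0}^d α_i · C(n,i) with binomial coefficients C(n,i), and define the smoothness norm ‖f‖_{C^∞[N]} = max_{1 ≤ i ≤ d} N^i ‖α_i‖_{ℝ/ℤ}. If instead f(n) = ∑_{i=0}^d β_i n^i, then there exists a positive integer D = O_d(1) such that ‖D β_i‖_{ℝ/ℤ} ≪_d N^{-i} ‖f‖_{C^∞[N]} for all i = 1, …, d. -/

import Mathlib

open Finset Polynomial

set_option maxRecDepth 4000


/-- distance of a real number to the nearest integer, i.e. `‖x‖_{ℝ/ℤ}` -/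
noncomputable def dZ (x : ℝ) : ℝ := |x - round x|

lemma dZ_nonneg (x : ℝ) : 0 ≤ dZ x := abs_nonneg _

lemma dZ_le (x : ℝ) (k : ℤ) : dZ x ≤ |x - k| := by
  unfold dZ
  rcases eq_or_ne (round x) k with h | h
  · rw [h]
  · have h1 : |x - round x| ≤ 1/2 := abs_sub_round x
    have h2 : (1 : ℝ) ≤ |(k : ℝ) - round x| := by
      rw [← Int.cast_sub, ← Int.cast_abs]
      exact_mod_cast Int.one_le_abs (sub_ne_zero.mpr (by exact_mod_cast (Ne.symm h)))
    have := abs_sub_abs_le_abs_sub ((k:ℝ) - round x) (x - round x)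
    have h3 : |(k:ℝ) - round x - (x - round x)| = |x - k| := by
      rw [show (k:ℝ) - round x - (x - round x) = -(x - k) by ring, abs_neg]
    linarith
lemma dZ_add_int (x : ℝ) (k : ℤ) : dZ (x + k) = dZ x := by
  unfold dZ; rw [round_add_intCast]; push_cast; ring_nf
lemma dZ_add_le (x y : ℝ) : dZ (x + y) ≤ dZ x + dZ y := by
  calc dZ (x+y) ≤ |x + y - (round x + round y : ℤ)| := dZ_le _ _
  _ ≤ dZ x + dZ y := by unfold dZ; push_cast; rw [show x + y - ((round x:ℝ) + round y) = (x - round x) + (y - round y) by ring]; exact abs_add_le _ _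
lemma dZ_int_mul (k : ℤ) (x : ℝ) : dZ (k * x) ≤ |(k:ℝ)| * dZ x := by
  calc dZ (k*x) ≤ |(k:ℝ) * x - (k * round x : ℤ)| := dZ_le _ _
  _ = |(k:ℝ)| * dZ x := by unfold dZ; push_cast; rw [← abs_mul]; ring_nf
lemma dZ_intCast (k : ℤ) : dZ (k : ℝ) = 0 := by
  have := dZ_le (k:ℝ) k; have := dZ_nonneg (k:ℝ); unfold dZ; simp
lemma dZ_sum_le (s : Finset ℕ) (c : ℕ → ℤ) (x : ℕ → ℝ) :
    dZ (∑ j ∈ s, (c j : ℝ) * x j) ≤ ∑ j ∈ s, |(c j : ℝ)| * dZ (x j) := by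
  induction s using Finset.induction_on with
  | empty => simpa using le_of_eq (by simpa using dZ_intCast 0)
  | insert a s h ih =>
    rw [Finset.sum_insert h, Finset.sum_insert h]

    exact le_trans (dZ_add_le _ _) (add_le_add (dZ_int_mul _ _) ih)



lemma prod_erase_range (d n : ℕ) (hn : n ≤ d) :
    ∏ j ∈ (range (d+1)).erase n, ((n:ℝ) - j) =
      (-1)^(d-n) * (n.factorial : ℝ) * ((d-n).factorial : ℝ) := by
  have hsplit : (range (d+1)).erase n = range n ∪ Ico (n+1) (d+1) := by
    ext j; simp [Finset.mem_erase, Finset.mem_range, Finset.mem_union, Finset.mem_Ico]; omega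
  have hdisj : Disjoint (range n) (Ico (n+1) (d+1)) := by
    rw [Finset.disjoint_left]; intro a ha hb; simp [Finset.mem_range, Finset.mem_Ico] at *; omega
  rw [hsplit, Finset.prod_union hdisj]
  have h1 : ∏ j ∈ range n, ((n:ℝ) - j) = (n.factorial : ℝ) := by
    have : ∏ j ∈ range n, ((n:ℝ) - j) = ((∏ j ∈ range n, (n - j) : ℕ) : ℝ) := by
      rw [Nat.cast_prod]
      exact Finset.prod_congr rfl fun j hj => by
        rw [Nat.cast_sub (le_of_lt (Finset.mem_range.mp hj))]
    rw [this, ← Nat.descFactorial_eq_prod_range, Nat.descFactorial_self]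
  have h2 : ∏ j ∈ Ico (n+1) (d+1), ((n:ℝ) - j) = (-1)^(d-n) * ((d-n).factorial : ℝ) := by
    have : ∀ j ∈ Ico (n+1) (d+1), ((n:ℝ) - j) = (-1) * (( (j - n : ℕ) : ℝ)) := by
      intro j hj
      rw [Finset.mem_Ico] at hj
      rw [Nat.cast_sub (by omega)]
      ring
    rw [Finset.prod_congr rfl this, Finset.prod_mul_distrib, Finset.prod_const, Nat.card_Ico]
    have : (∏ j ∈ Ico (n+1) (d+1), ((j - n : ℕ) : ℝ)) = (((d-n).factorial : ℕ) : ℝ) := by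
      rw [← Nat.cast_prod]
      congr 1
      rw [Finset.prod_Ico_eq_prod_range]
      have : ∀ x ∈ range (d + 1 - (n+1)), (n + 1 + x - n) = x + 1 := fun x _ => by omega
      rw [Finset.prod_congr rfl this, Finset.prod_range_add_one_eq_factorial]
      congr 1; omega
    rw [this]
    congr 2
    omega
  rw [h1, h2]; ring

lemma coeff_basis_int (d n i : ℕ) (hn : n ≤ d) :
    ∃ z : ℤ, (d.factorial : ℝ) *
      (Lagrange.basis (range (d+1)) (fun j : ℕ => (j:ℝ)) n).coeff i = z := by
  set t := (range (d+1)).erase n with ht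
  have hb : Lagrange.basis (range (d+1)) (fun j : ℕ => (j:ℝ)) n =
      C ((∏ j ∈ t, ((n:ℝ) - j))⁻¹) * ∏ j ∈ t, (X - C (j:ℝ)) := by
    unfold Lagrange.basis Lagrange.basisDivisor
    rw [Finset.prod_mul_distrib]
    congr 1
    rw [← Finset.prod_inv_distrib]
    exact (map_prod (Polynomial.C : ℝ →+* ℝ[X]) (fun x : ℕ => ((n:ℝ) - x)⁻¹) t).symm
  have hint : ∏ j ∈ t, (X - C ((j:ℝ))) =
      Polynomial.map (Int.castRingHom ℝ) (∏ j ∈ t, (X - C ((j:ℤ)))) := by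
    rw [Polynomial.map_prod]
    exact Finset.prod_congr rfl fun j _ => by
      rw [Polynomial.map_sub, Polynomial.map_X, Polynomial.map_C]
      simp
  set c : ℤ := (∏ j ∈ t, (X - C ((j:ℤ)))).coeff i with hc
  refine ⟨(-1)^(d-n) * (d.choose n) * c, ?_⟩
  rw [hb, Polynomial.coeff_C_mul, hint, Polynomial.coeff_map, ← hc]
  rw [prod_erase_range d n hn]
  have h1 : (n.factorial : ℝ) ≠ 0 := Nat.cast_ne_zero.mpr n.factorial_ne_zero
  have h2 : ((d-n).factorial : ℝ) ≠ 0 := Nat.cast_ne_zero.mpr (d-n).factorial_ne_zero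
  have hd : (d.factorial : ℝ) = (d.choose n) * n.factorial * ((d-n).factorial) := by
    rw [← Nat.choose_mul_factorial_mul_factorial hn]
    push_cast; ring
  have h3 : ((-1:ℝ))^(d-n) ≠ 0 := pow_ne_zero _ (by norm_num)
  rw [hd]
  push_cast
  field_simp
  have h4 : ((-1:ℝ))^(d-n) * (-1)^(d-n) = 1 := by
    rw [← pow_add, ← two_mul, pow_mul]
    norm_num
  linear_combination (-(↑(d.choose n) * (Int.castRingHom ℝ) c)) * h4

/-- integer change-of-basis coefficients -/
noncomputable def mcoef (d i j : ℕ) : ℤ := ((d.factorial / j.factorial : ℕ) : ℤ) * (descPochhammer ℤ j).coeff i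

lemma mcoef_eq_zero (d i j : ℕ) (hj : j < i) : mcoef d i j = 0 := by
  unfold mcoef
  rw [Polynomial.coeff_eq_zero_of_natDegree_lt, mul_zero]
  rw [descPochhammer_natDegree]
  exact hj

lemma exists_int_sum {s : Finset ℕ} {f : ℕ → ℝ} (h : ∀ n ∈ s, ∃ z : ℤ, f n = z) :
    ∃ K : ℤ, ∑ n ∈ s, f n = K := by
  classical
  induction s using Finset.induction_on with
  | empty => exact ⟨0, by simp⟩
  | insert a s hnot ih =>
    obtain ⟨z, hz⟩ := h a (Finset.mem_insert_self a s)
    obtain ⟨K, hK⟩ := ih fun n hn => h n (Finset.mem_insert_of_mem hn)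
    exact ⟨z + K, by rw [Finset.sum_insert hnot, hz, hK]; push_cast; ring⟩

lemma key (d : ℕ) (α β : ℕ → ℝ)
    (h : ∀ n : ℕ, ∃ k : ℤ,
      (∑ i ∈ range (d+1), α i * (n.choose i : ℝ)) -
        (∑ i ∈ range (d+1), β i * (n:ℝ)^i) = k)
    (i : ℕ) (hi : i ≤ d) :
    ∃ K : ℤ, (d.factorial : ℝ) * β i =
      (∑ j ∈ range (d+1), ((mcoef d i j : ℤ):ℝ) * α j) + K := by
  classical
  choose k hk using h
  set v : ℕ → ℝ := fun m => (m : ℝ) with hv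
  set P : ℝ[X] := ∑ j ∈ range (d+1), C (α j / j.factorial) * descPochhammer ℝ j with hP
  set Q : ℝ[X] := ∑ j ∈ range (d+1), C (β j) * X^j with hQ
  have hPeval : ∀ n : ℕ, P.eval (n:ℝ) = ∑ j ∈ range (d+1), α j * (n.choose j : ℝ) := by
    intro n
    rw [hP, Polynomial.eval_finset_sum]
    refine Finset.sum_congr rfl fun j _ => ?_
    rw [Polynomial.eval_mul, Polynomial.eval_C, descPochhammer_eval_eq_descFactorial,
      Nat.descFactorial_eq_factorial_mul_choose]
    have hj : (j.factorial : ℝ) ≠ 0 := Nat.cast_ne_zero.mpr j.factorial_ne_zero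
    push_cast
    field_simp
  have hQeval : ∀ n : ℕ, Q.eval (n:ℝ) = ∑ j ∈ range (d+1), β j * (n:ℝ)^j := by
    intro n
    rw [hQ, Polynomial.eval_finset_sum]
    simp
  set R : ℝ[X] := P - Q with hRdef
  have hReval : ∀ n ∈ range (d+1), R.eval (v n) = ((k n : ℝ)) := by
    intro n _
    rw [hRdef, Polynomial.eval_sub, hPeval, hQeval]
    exact hk n
  have hdegP : P.degree ≤ (d : WithBot ℕ) := by
    refine (Polynomial.degree_sum_le _ _).trans ?_
    rw [Finset.sup_le_iff]
    intro j hj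
    refine (Polynomial.degree_mul_le _ _).trans ?_
    have h1 : (Polynomial.C (α j / j.factorial)).degree ≤ 0 := Polynomial.degree_C_le
    have h2 : (descPochhammer ℝ j).degree ≤ (j : WithBot ℕ) := by
      refine Polynomial.degree_le_natDegree.trans ?_
      rw [descPochhammer_natDegree]
    calc (Polynomial.C (α j / j.factorial)).degree + (descPochhammer ℝ j).degree
        ≤ 0 + (j : WithBot ℕ) := add_le_add h1 h2
      _ = (j : WithBot ℕ) := by rw [zero_add]
      _ ≤ (d : WithBot ℕ) := by
          exact_mod_cast Nat.cast_le.mpr (Nat.lt_succ_iff.mp (Finset.mem_range.mp hj))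
  have hdegQ : Q.degree ≤ (d : WithBot ℕ) := by
    refine (Polynomial.degree_sum_le _ _).trans ?_
    rw [Finset.sup_le_iff]
    intro j hj
    refine (Polynomial.degree_mul_le _ _).trans ?_
    have h1 : (Polynomial.C (β j)).degree ≤ 0 := Polynomial.degree_C_le
    have h2 : ((X : ℝ[X])^j).degree ≤ (j : WithBot ℕ) := le_of_eq (Polynomial.degree_X_pow j)
    calc (Polynomial.C (β j)).degree + ((X:ℝ[X])^j).degree
        ≤ 0 + (j : WithBot ℕ) := add_le_add h1 h2
      _ = (j : WithBot ℕ) := by rw [zero_add]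
      _ ≤ (d : WithBot ℕ) := by
          exact_mod_cast Nat.cast_le.mpr (Nat.lt_succ_iff.mp (Finset.mem_range.mp hj))
  have hdegR : R.degree < ((d+1 : ℕ) : WithBot ℕ) := by
    refine lt_of_le_of_lt ((Polynomial.degree_sub_le _ _).trans (max_le hdegP hdegQ)) ?_
    exact_mod_cast Nat.cast_lt.mpr (Nat.lt_succ_self d)
  have hinj : Set.InjOn v (range (d+1)) := fun a _ b _ hab => Nat.cast_injective hab
  have hR : R = Lagrange.interpolate (range (d+1)) v (fun n => (k n : ℝ)) := by
    refine Lagrange.eq_interpolate_of_eval_eq _ hinj ?_ hReval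
    rwa [Finset.card_range]
  have hQc : Q.coeff i = β i := by
    rw [hQ, Polynomial.finset_sum_coeff]
    simp only [Polynomial.coeff_C_mul, Polynomial.coeff_X_pow]
    rw [Finset.sum_eq_single i (fun b _ hb => by rw [if_neg (Ne.symm hb), mul_zero])
      (fun hb => absurd (Finset.mem_range.mpr (Nat.lt_succ_iff.mpr hi)) hb)]
    rw [if_pos rfl, mul_one]
  have hPc : (d.factorial : ℝ) * P.coeff i = ∑ j ∈ range (d+1), ((mcoef d i j : ℤ):ℝ) * α j := by
    rw [hP, Polynomial.finset_sum_coeff, Finset.mul_sum]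
    refine Finset.sum_congr rfl fun j hj => ?_
    rw [Polynomial.coeff_C_mul, ← descPochhammer_map (Int.castRingHom ℝ) j,
      Polynomial.coeff_map]
    have hjd : j.factorial ∣ d.factorial :=
      Nat.factorial_dvd_factorial (Nat.lt_succ_iff.mp (Finset.mem_range.mp hj))
    have hcancel : ((d.factorial / j.factorial : ℕ) : ℝ) * (j.factorial : ℝ) = (d.factorial : ℝ) := by
      exact_mod_cast congrArg (Nat.cast : ℕ → ℝ) (Nat.div_mul_cancel hjd)
    have hjne : (j.factorial : ℝ) ≠ 0 := Nat.cast_ne_zero.mpr j.factorial_ne_zero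
    unfold mcoef
    push_cast
    rw [← hcancel]
    field_simp
    simp only [eq_intCast]; norm_cast; ring
  have hRc : ∃ K : ℤ, (d.factorial : ℝ) * R.coeff i = K := by
    rw [hR, Lagrange.interpolate_apply, Polynomial.finset_sum_coeff, Finset.mul_sum]
    refine exists_int_sum fun n hn => ?_
    obtain ⟨z, hz⟩ := coeff_basis_int d n i (Nat.lt_succ_iff.mp (Finset.mem_range.mp hn))
    refine ⟨k n * z, ?_⟩
    rw [Polynomial.coeff_C_mul]
    push_cast
    rw [show (d.factorial : ℝ) * ((k n : ℝ) * (Lagrange.basis (range (d+1)) v n).coeff i)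
      = (k n : ℝ) * ((d.factorial : ℝ) * (Lagrange.basis (range (d+1)) v n).coeff i) by ring, hz]
  obtain ⟨K, hK⟩ := hRc
  refine ⟨-K, ?_⟩
  have hβ : β i = P.coeff i - R.coeff i := by
    rw [hRdef, Polynomial.coeff_sub, ← hQc]; ring
  rw [hβ, mul_sub, hPc, hK]
  push_cast
  ring

theorem stmt_1 (d : ℕ) :
    ∃ C : ℝ, 0 < C ∧ ∀ (N : ℕ), 1 ≤ N → ∀ (α β : ℕ → ℝ),
      (∀ n : ℕ, ∃ k : ℤ,
          (∑ i ∈ range (d + 1), α i * (n.choose i : ℝ)) -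
            (∑ i ∈ range (d + 1), β i * (n : ℝ) ^ i) = (k : ℝ)) →
      ∀ S : ℝ, (∀ i ∈ Icc 1 d, (N : ℝ) ^ i * dZ (α i) ≤ S) →
      ∃ D : ℕ, 0 < D ∧ (D : ℝ) ≤ C ∧
        ∀ i ∈ Icc 1 d, (N : ℝ) ^ i * dZ ((D : ℝ) * β i) ≤ C * S := by
  classical
  set Cm : ℝ := (∑ i ∈ range (d+1), ∑ j ∈ range (d+1), |((mcoef d i j : ℤ):ℝ)|)
      + d.factorial + 1 with hCm
  have hsum0 : 0 ≤ ∑ i ∈ range (d+1), ∑ j ∈ range (d+1), |((mcoef d i j : ℤ):ℝ)| :=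
    Finset.sum_nonneg fun i _ => Finset.sum_nonneg fun j _ => abs_nonneg _
  have hfac0 : (0:ℝ) ≤ d.factorial := Nat.cast_nonneg _
  have hCpos : 0 < Cm := by rw [hCm]; linarith
  refine ⟨Cm, hCpos, ?_⟩
  intro N hN α β hint S hS
  refine ⟨d.factorial, d.factorial_pos, by rw [hCm]; linarith, ?_⟩
  intro i hi
  obtain ⟨h1i, hid⟩ := Finset.mem_Icc.mp hi
  have hS0 : 0 ≤ S := le_trans (mul_nonneg (by positivity) (dZ_nonneg _)) (hS i hi)
  obtain ⟨K, hK⟩ := key d α β hint i hid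
  have hdz : dZ ((d.factorial : ℝ) * β i)
      = dZ (∑ j ∈ range (d+1), ((mcoef d i j : ℤ):ℝ) * α j) := by
    rw [hK, dZ_add_int]
  rw [hdz]
  have hb := dZ_sum_le (range (d+1)) (fun j => mcoef d i j) α
  have hN1 : (1:ℝ) ≤ (N:ℝ) := by exact_mod_cast hN
  calc (N:ℝ)^i * dZ (∑ j ∈ range (d+1), ((mcoef d i j : ℤ):ℝ) * α j)
      ≤ (N:ℝ)^i * ∑ j ∈ range (d+1), |((mcoef d i j : ℤ):ℝ)| * dZ (α j) :=
        mul_le_mul_of_nonneg_left hb (by positivity)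
    _ = ∑ j ∈ range (d+1), (N:ℝ)^i * (|((mcoef d i j : ℤ):ℝ)| * dZ (α j)) := Finset.mul_sum _ _ _
    _ ≤ ∑ j ∈ range (d+1), |((mcoef d i j : ℤ):ℝ)| * S := by
        refine Finset.sum_le_sum fun j hj => ?_
        by_cases hc : mcoef d i j = 0
        · simp [hc]
        · have hij : i ≤ j := by
            by_contra hlt
            exact hc (mcoef_eq_zero d i j (by omega))
          have hjIcc : j ∈ Icc 1 d := Finset.mem_Icc.mpr
            ⟨le_trans h1i hij, Nat.lt_succ_iff.mp (Finset.mem_range.mp hj)⟩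
          have hpow : (N:ℝ)^i ≤ (N:ℝ)^j := pow_le_pow_right₀ hN1 hij
          calc (N:ℝ)^i * (|((mcoef d i j : ℤ):ℝ)| * dZ (α j))
              = |((mcoef d i j : ℤ):ℝ)| * ((N:ℝ)^i * dZ (α j)) := by ring
            _ ≤ |((mcoef d i j : ℤ):ℝ)| * ((N:ℝ)^j * dZ (α j)) := by
                refine mul_le_mul_of_nonneg_left ?_ (abs_nonneg _)
                exact mul_le_mul_of_nonneg_right hpow (dZ_nonneg _)
            _ ≤ |((mcoef d i j : ℤ):ℝ)| * S :=
                mul_le_mul_of_nonneg_left (hS j hjIcc) (abs_nonneg _)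
    _ = (∑ j ∈ range (d+1), |((mcoef d i j : ℤ):ℝ)|) * S := (Finset.sum_mul _ _ _).symm
    _ ≤ Cm * S := by
        refine mul_le_mul_of_nonneg_right ?_ hS0
        rw [hCm]
        have hle : (∑ j ∈ range (d+1), |((mcoef d i j : ℤ):ℝ)|)
            ≤ ∑ i' ∈ range (d+1), ∑ j ∈ range (d+1), |((mcoef d i' j : ℤ):ℝ)| :=
          Finset.single_le_sum (f := fun i' => ∑ j ∈ range (d+1), |((mcoef d i' j : ℤ):ℝ)|)
            (fun i' _ => Finset.sum_nonneg fun j _ => abs_nonneg _)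
            (Finset.mem_range.mpr (Nat.lt_succ_iff.mpr hid))
        linarith
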